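/- For every integer n ≥ 1 and numbers of millers |M| and locations |L|, the instance with one location x hosting n|M|+1 bakers restricted to x and each of the other |L|−1 locations hosting n bakers restricted only to that location has a unique pure Nash equilibrium in which all millers are at x, and the ratio W(OPT)/W(NE) equals (|M|n + 1 + n(min(|L|,|M|)−1))/(|M|n + 1). Hence the price of stability is at least 1 + (min(|L|,|M|)−1)/|M|. -/

import Mathlib

open Finset

/-- Number of agents (bakers or millers) choosing location `ℓ`. -/
def cnt {A L : Type*} [Fintype A] [DecidableEq L] (f : A → L) (ℓ : L) : ℕ :=
  (Finset.univ.filter (fun a => f a = ℓ)).card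

/-- Utility of baker `b`: millers at her location over bakers at her location. -/
def bakerUtil {L B M : Type*} [Fintype B] [Fintype M] [DecidableEq L]
    (s : B → L) (t : M → L) (b : B) : ℚ :=
  (cnt t (s b) : ℚ) / (cnt s (s b) : ℚ)

/-- Utility of miller `m`: bakers at her location over millers at her location. -/
def millerUtil {L B M : Type*} [Fintype B] [Fintype M] [DecidableEq L]
    (s : B → L) (t : M → L) (m : M) : ℚ :=
  (cnt s (t m) : ℚ) / (cnt t (t m) : ℚ)

/-- Pure Nash equilibrium: no baker can strictly improve by a unilateral deviation
to a feasible location, and no miller can strictly improve by a unilateral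
deviation to any location. -/
def isNE {L B M : Type*} [Fintype B] [Fintype M] [DecidableEq L] [DecidableEq B] [DecidableEq M]
    (feas : B → Finset L) (s : B → L) (t : M → L) : Prop :=
  (∀ b : B, ∀ ℓ' ∈ feas b,
    bakerUtil (Function.update s b ℓ') t b ≤ bakerUtil s t b) ∧
  (∀ m : M, ∀ ℓ' : L,
    millerUtil s (Function.update t m ℓ') m ≤ millerUtil s t m)

/-- Coverage: the number of bakers sharing a location with at least one miller. -/
def coverage {L B M : Type*} [Fintype B] [Fintype M] [DecidableEq L]
    (s : B → L) (t : M → L) : ℕ :=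
  (Finset.univ.filter (fun b : B => 0 < cnt t (s b))).card

/-- in the instance with a location `x` (here `none`) hosting
`n·|M| + 1` bakers restricted to `x` and `k` further locations `ℓ_j` (here `some j`)
each hosting `n` bakers restricted to `ℓ_j`, every pure Nash equilibrium has all
millers at `x` and coverage `n·|M| + 1` (and such an equilibrium exists), while the
maximum coverage is `n·|M| + 1 + n·(min(|L|,|M|) − 1)` with `|L| = k + 1`; hence
PoS ≥ 1 + (min(|L|,|M|)−1)/|M|. -/
lemma cnt_sumElim {A B L : Type*} [Fintype A] [Fintype B] [DecidableEq L]
    (f : A → L) (g : B → L) (ℓ : L) :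
    cnt (Sum.elim f g) ℓ = cnt f ℓ + cnt g ℓ := by
  classical
  unfold cnt
  rw [← Finset.univ_disjSum_univ, ← Finset.card_disjSum]
  congr 1
  ext x; cases x <;> simp

lemma cnt_le_card {A L : Type*} [Fintype A] [DecidableEq L] (f : A → L) (ℓ : L) :
    cnt f ℓ ≤ Fintype.card A := by
  classical
  exact le_trans (Finset.card_filter_le _ _) (le_of_eq (Finset.card_univ))

lemma cnt_pos_self {A L : Type*} [Fintype A] [DecidableEq L] (f : A → L) (a : A) :
    0 < cnt f (f a) := by
  classical
  apply Finset.card_pos.2 ⟨a, by simp⟩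

lemma cnt_pos_iff {A L : Type*} [Fintype A] [DecidableEq L] (f : A → L) (ℓ : L) :
    0 < cnt f ℓ ↔ ∃ a, f a = ℓ := by
  classical
  rw [cnt, Finset.card_pos]
  constructor
  · rintro ⟨a, ha⟩; exact ⟨a, (Finset.mem_filter.1 ha).2⟩
  · rintro ⟨a, ha⟩; exact ⟨a, by simp [ha]⟩

lemma cnt_eq_card_of_forall {A L : Type*} [Fintype A] [DecidableEq L]
    {f : A → L} {ℓ : L} (h : ∀ a, f a = ℓ) : cnt f ℓ = Fintype.card A := by
  classical
  simp [cnt, Finset.filter_true_of_mem (fun a _ => h a)]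

lemma cnt_eq_zero_of_forall {A L : Type*} [Fintype A] [DecidableEq L]
    {f : A → L} {ℓ : L} (h : ∀ a, f a ≠ ℓ) : cnt f ℓ = 0 := by
  classical
  simp only [cnt, Finset.card_eq_zero]
  exact Finset.filter_false_of_mem (fun a _ => h a)

def s0 (n k mM : ℕ) : Fin (n * mM + 1) ⊕ (Fin k × Fin n) → Option (Fin k) :=
  Sum.elim (fun _ => none) (fun p => some p.1)

lemma cnt_fst {k n : ℕ} (j : Fin k) :
    cnt (fun p : Fin k × Fin n => (some p.1 : Option (Fin k))) (some j) = n := by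
  unfold cnt
  rw [← Finset.univ_product_univ]
  have : ((univ ×ˢ univ : Finset (Fin k × Fin n)).filter
      fun p => (some p.1 : Option (Fin k)) = some j)
      = (univ.filter fun a : Fin k => a = j) ×ˢ univ := by
    rw [← Finset.filter_product_left]
    simp
  rw [this, Finset.card_product, Finset.filter_eq', if_pos (Finset.mem_univ j)]
  simp

lemma cnt_s0_none (n k mM : ℕ) : cnt (s0 n k mM) none = n * mM + 1 := by
  rw [s0, cnt_sumElim]
  simp [cnt]

lemma cnt_s0_some (n k mM : ℕ) (j : Fin k) : cnt (s0 n k mM) (some j) = n := by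
  rw [s0, cnt_sumElim, cnt_fst]
  simp [cnt]

lemma card_fin_lt {k c : ℕ} (h : c ≤ k) :
    (univ.filter (fun j : Fin k => (j : ℕ) < c)).card = c := by
  rw [← Finset.card_range c]
  apply Finset.card_bij (fun (a : Fin k) _ => (a : ℕ))
  · intro a ha; simpa using (Finset.mem_filter.1 ha).2
  · intro a _ b _ hab; exact Fin.ext hab
  · intro i hi
    have hik : i < k := lt_of_lt_of_le (Finset.mem_range.1 hi) h
    exact ⟨⟨i, hik⟩, by simpa using Finset.mem_range.1 hi, rfl⟩

lemma coverage_s0 (n k mM : ℕ) (t : Fin mM → Option (Fin k)) :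
    coverage (s0 n k mM) t =
      (if 0 < cnt t none then n * mM + 1 else 0) +
      (univ.filter (fun j : Fin k => 0 < cnt t (some j))).card * n := by
  classical
  unfold coverage
  rw [← Finset.univ_disjSum_univ]
  have : ((univ.disjSum univ).filter (fun b => 0 < cnt t (s0 n k mM b)))
      = ((univ : Finset (Fin (n * mM + 1))).filter (fun _ => 0 < cnt t none)).disjSum
        ((univ : Finset (Fin k × Fin n)).filter (fun p => 0 < cnt t (some p.1))) := by
    ext x; rw [Finset.mem_filter]; cases x <;>
      simp only [Finset.inl_mem_disjSum, Finset.inr_mem_disjSum, Finset.mem_filter,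
        Finset.mem_univ, true_and, s0, Sum.elim_inl, Sum.elim_inr]
  rw [this, Finset.card_disjSum]
  congr 1
  · rw [Finset.filter_const]
    split_ifs <;> simp
  · rw [← Finset.univ_product_univ,
      Finset.filter_product_left (p := fun a : Fin k => 0 < cnt t (some a)),
      Finset.card_product, Finset.card_univ, Fintype.card_fin]

theorem pos_lower_bound (n k mM : ℕ) (hn : 1 ≤ n) (hm : 1 ≤ mM) :
    (∀ (s : Fin (n * mM + 1) ⊕ (Fin k × Fin n) → Option (Fin k))
       (t : Fin mM → Option (Fin k)),
      (∀ b, s b ∈ Sum.elim (fun _ => ({none} : Finset (Option (Fin k))))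
          (fun p => ({some p.1} : Finset (Option (Fin k)))) b) →
      isNE (Sum.elim (fun _ => ({none} : Finset (Option (Fin k))))
          (fun p => ({some p.1} : Finset (Option (Fin k))))) s t →
      ((∀ m, t m = none) ∧ coverage s t = n * mM + 1)) ∧
    (∃ (s : Fin (n * mM + 1) ⊕ (Fin k × Fin n) → Option (Fin k))
       (t : Fin mM → Option (Fin k)),
      (∀ b, s b ∈ Sum.elim (fun _ => ({none} : Finset (Option (Fin k))))
          (fun p => ({some p.1} : Finset (Option (Fin k)))) b) ∧
      isNE (Sum.elim (fun _ => ({none} : Finset (Option (Fin k))))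
          (fun p => ({some p.1} : Finset (Option (Fin k))))) s t ∧
      (∀ m, t m = none)) ∧
    (∀ (s' : Fin (n * mM + 1) ⊕ (Fin k × Fin n) → Option (Fin k))
       (t' : Fin mM → Option (Fin k)),
      (∀ b, s' b ∈ Sum.elim (fun _ => ({none} : Finset (Option (Fin k))))
          (fun p => ({some p.1} : Finset (Option (Fin k)))) b) →
      coverage s' t' ≤ n * mM + 1 + n * (min (k + 1) mM - 1)) ∧
    (∃ (s' : Fin (n * mM + 1) ⊕ (Fin k × Fin n) → Option (Fin k))
       (t' : Fin mM → Option (Fin k)),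
      (∀ b, s' b ∈ Sum.elim (fun _ => ({none} : Finset (Option (Fin k))))
          (fun p => ({some p.1} : Finset (Option (Fin k)))) b) ∧
      coverage s' t' = n * mM + 1 + n * (min (k + 1) mM - 1)) := by
  classical
  have hforced : ∀ s : Fin (n * mM + 1) ⊕ (Fin k × Fin n) → Option (Fin k),
      (∀ b, s b ∈ Sum.elim (fun _ => ({none} : Finset (Option (Fin k))))
          (fun p => ({some p.1} : Finset (Option (Fin k)))) b) → s = s0 n k mM := by
    intro s hs; funext b
    cases b with
    | inl a => simpa [s0] using hs (Sum.inl a)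
    | inr p => simpa [s0] using hs (Sum.inr p)
  refine ⟨?_, ?_, ?_, ?_⟩
  · -- Part 1: uniqueness of NE
    intro s t hs hne
    rw [hforced s hs] at hne ⊢
    obtain ⟨-, hM⟩ := hne
    have hall : ∀ m, t m = none := by
      intro m
      by_contra hne'
      obtain ⟨j, hj⟩ := Option.ne_none_iff_exists'.mp hne'
      have key := hM m none
      set t2 := Function.update t m (none : Option (Fin k)) with ht2
      have ht2m : t2 m = none := Function.update_self m none t
      have hc1 : 0 < cnt t (some j) := by rw [← hj]; exact cnt_pos_self t m
      have hc'1 : 0 < cnt t2 none := by rw [← ht2m]; exact cnt_pos_self t2 m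
      have hc'le : cnt t2 none ≤ mM := by
        simpa using cnt_le_card t2 none
      rw [millerUtil, millerUtil, hj, ht2m, cnt_s0_none, cnt_s0_some] at key
      have hlt : (n : ℚ) / (cnt t (some j) : ℚ)
          < ((n * mM + 1 : ℕ) : ℚ) / (cnt t2 none : ℚ) := by
        rw [div_lt_div_iff₀ (by exact_mod_cast hc1) (by exact_mod_cast hc'1)]
        have h : n * cnt t2 none < (n * mM + 1) * cnt t (some j) :=
          calc n * cnt t2 none ≤ n * mM := Nat.mul_le_mul_left n hc'le
            _ < n * mM + 1 := Nat.lt_succ_self _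
            _ ≤ (n * mM + 1) * cnt t (some j) := Nat.le_mul_of_pos_right _ hc1
        exact_mod_cast h
      have key' : ((n * mM + 1 : ℕ) : ℚ) / (cnt t2 none : ℚ)
          ≤ (n : ℚ) / (cnt t (some j) : ℚ) := by exact_mod_cast key
      exact absurd key' (not_le.2 hlt)
    refine ⟨hall, ?_⟩
    rw [coverage_s0]
    have h1 : cnt t none = mM := by
      simpa using cnt_eq_card_of_forall hall
    have h2 : (univ.filter (fun j : Fin k => 0 < cnt t (some j))) = ∅ := by
      apply Finset.filter_false_of_mem
      intro j _
      rw [not_lt, Nat.le_zero]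
      exact cnt_eq_zero_of_forall (fun m => by simp [hall m])
    rw [h1, h2, if_pos (by omega)]
    simp
  · -- Part 2: existence of NE
    refine ⟨s0 n k mM, fun _ => none, ?_, ⟨?_, ?_⟩, fun _ => rfl⟩
    · intro b; cases b <;> simp [s0]
    · intro b ℓ' hℓ'
      have hb : ℓ' = s0 n k mM b := by
        cases b with
        | inl a => simpa [s0] using hℓ'
        | inr p => simpa [s0] using hℓ'
      rw [hb, Function.update_eq_self]
    · intro m ℓ'
      have hcn : cnt (fun _ : Fin mM => (none : Option (Fin k))) none = mM := by
        simpa using cnt_eq_card_of_forall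
          (f := fun _ : Fin mM => (none : Option (Fin k))) (ℓ := none) (fun _ => rfl)
      cases ℓ' with
      | none =>
        rw [show Function.update (fun _ : Fin mM => (none : Option (Fin k))) m none
          = fun _ => none from Function.update_eq_self m _]
      | some j =>
        set t2 := Function.update (fun _ : Fin mM => (none : Option (Fin k))) m (some j)
          with ht2
        have ht2m : t2 m = some j := Function.update_self m _ _
        have hc1 : 0 < cnt t2 (some j) := by rw [← ht2m]; exact cnt_pos_self t2 m
        rw [millerUtil, millerUtil, ht2m]
        show (cnt (s0 n k mM) (some j) : ℚ) / _ ≤ (cnt (s0 n k mM) none : ℚ) / _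
        rw [cnt_s0_some, cnt_s0_none, hcn]
        rw [div_le_div_iff₀ (by exact_mod_cast hc1) (by exact_mod_cast hm)]
        have h : n * mM ≤ (n * mM + 1) * cnt t2 (some j) :=
          calc n * mM ≤ n * mM + 1 := Nat.le_succ _
            _ ≤ (n * mM + 1) * cnt t2 (some j) := Nat.le_mul_of_pos_right _ hc1
        exact_mod_cast h
  · -- Part 3: coverage upper bound
    intro s' t' hs'
    rw [hforced s' hs', coverage_s0]
    set C := univ.filter (fun j : Fin k => 0 < cnt t' (some j)) with hC
    have hCsub : ∀ j ∈ C, some j ∈ univ.image t' := by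
      intro j hj
      obtain ⟨m, hm'⟩ := (cnt_pos_iff t' (some j)).1 (Finset.mem_filter.1 hj).2
      exact Finset.mem_image.2 ⟨m, Finset.mem_univ m, hm'⟩
    by_cases h0 : 0 < cnt t' none
    · rw [if_pos h0]
      obtain ⟨m0, hm0⟩ := (cnt_pos_iff t' none).1 h0
      have hcard : C.card ≤ ((univ.image t').erase none).card := by
        apply Finset.card_le_card_of_injOn (fun j => some j)
        · intro j hj; exact Finset.mem_erase.2 ⟨by simp, hCsub j hj⟩
        · intro a _ b _ h; exact Option.some_injective _ h
      have h1 : ((univ.image t').erase none).card = (univ.image t').card - 1 :=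
        Finset.card_erase_of_mem (Finset.mem_image.2 ⟨m0, Finset.mem_univ _, hm0⟩)
      have h2 : (univ.image t').card ≤ mM := le_trans Finset.card_image_le (by simp)
      have hCk : C.card ≤ k := le_trans (Finset.card_filter_le _ _) (by simp)
      have hfin : C.card ≤ min (k + 1) mM - 1 := by omega
      have h5 := Nat.mul_le_mul_right n hfin
      have h6 : (min (k + 1) mM - 1) * n = n * (min (k + 1) mM - 1) := Nat.mul_comm _ _
      omega
    · rw [if_neg h0]
      have hCm : C.card ≤ mM := by
        have h3 : C.card ≤ (univ.image t').card :=
          Finset.card_le_card_of_injOn (fun j => some j) hCsub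
            (fun a _ b _ h => Option.some_injective _ h)
        exact le_trans h3 (le_trans Finset.card_image_le (by simp))
      have := Nat.mul_le_mul_right n hCm
      have h4 : mM * n = n * mM := Nat.mul_comm mM n
      omega
  · -- Part 4: optimal coverage achieved
    set c := min k (mM - 1) with hcdef
    have hck : c ≤ k := min_le_left _ _
    have hcm : c ≤ mM - 1 := min_le_right _ _
    set t'' := fun m : Fin mM =>
      if h : (m : ℕ) < c then some (⟨m, lt_of_lt_of_le h hck⟩ : Fin k) else none with ht''
    refine ⟨s0 n k mM, t'', ?_, ?_⟩
    · intro b; cases b <;> simp [s0]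
    · rw [coverage_s0]
      have h0 : 0 < cnt t'' none := by
        refine (cnt_pos_iff t'' none).2 ⟨⟨mM - 1, by omega⟩, ?_⟩
        have hnot : ¬ ((mM - 1 : ℕ) < c) := by omega
        simp [ht'', hnot]
      have hfil : univ.filter (fun j : Fin k => 0 < cnt t'' (some j))
          = univ.filter (fun j : Fin k => (j : ℕ) < c) := by
        apply Finset.filter_congr
        intro j _
        constructor
        · intro hpos
          obtain ⟨m, hm'⟩ := (cnt_pos_iff t'' (some j)).1 hpos
          by_cases hmc : (m : ℕ) < c
          · rw [ht''] at hm'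
            simp only [hmc, dif_pos, Option.some.injEq] at hm'
            rw [← hm']
            exact hmc
          · rw [ht''] at hm'
            simp [hmc] at hm'
        · intro hj
          refine (cnt_pos_iff t'' (some j)).2 ⟨⟨(j : ℕ), by omega⟩, ?_⟩
          rw [ht'']
          simp only [hj, dif_pos]
      rw [hfil, card_fin_lt hck, if_pos h0]
      have hc2 : c = min (k + 1) mM - 1 := by omega
      rw [hc2]; ring
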